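/- For every T > 0 there exists a constant C₃, independent of n, such that for every integer n ≥ 2, all x, y ∈ [0,1] and every t ∈ [0,T], ∫₀ᵗ ∫₀¹ (Gⁿ(t-r, x, z) - Gⁿ(t-r, y, z))² dz dr ≤ C₃·|x-y|. -/

import Mathlib

/-- `φ_j(x) = √2 sin(jπx)`. -/
noncomputable def phi (j : ℕ) (x : ℝ) : ℝ := Real.sqrt 2 * Real.sin ((j : ℝ) * Real.pi * x)

/-- The eigenvalue `λ_j^n = -4n² sin²(jπ/(2n))` of `n²Aⁿ`. -/
noncomputable def lamN (n j : ℕ) : ℝ :=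
  -4 * (n : ℝ)^2 * (Real.sin ((j : ℝ) * Real.pi / (2 * n)))^2

/-- `k_n(y) = ⌊ny⌋/n`. -/
noncomputable def kn (n : ℕ) (y : ℝ) : ℝ := (⌊(n : ℝ) * y⌋ : ℝ) / n

/-- `φ_j^n`, the piecewise linear interpolation of `φ_j` on the grid `{k/n}`:
for `x ∈ [k/n, (k+1)/n]`, `φ_j^n(x) = φ_j(k/n) + (nx - k)(φ_j((k+1)/n) - φ_j(k/n))`. -/
noncomputable def phiLin (n j : ℕ) (x : ℝ) : ℝ :=
  phi j ((⌊(n : ℝ) * x⌋ : ℝ) / n)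
    + ((n : ℝ) * x - (⌊(n : ℝ) * x⌋ : ℝ))
      * (phi j (((⌊(n : ℝ) * x⌋ : ℝ) + 1) / n) - phi j ((⌊(n : ℝ) * x⌋ : ℝ) / n))

/-- The discretized kernel `Gⁿ(t,x,y) = Σ_{j=1}^{n-1} e^{λ_j^n t} φ_j^n(x) φ_j(k_n(y))`. -/
noncomputable def GN (n : ℕ) (t x y : ℝ) : ℝ :=
  ∑ j ∈ Finset.Icc 1 (n - 1), Real.exp (lamN n j * t) * phiLin n j x * phi j (kn n y)




open MeasureTheory intervalIntegral Finset in
lemma integral_comp_kn (n : ℕ) (hn : 1 ≤ n) (g : ℝ → ℝ) :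
    ∫ z in (0:ℝ)..1, g (kn n z) = (1 / n) * ∑ k ∈ Finset.range n, g (k / n) := by
  have hn' : (0:ℝ) < n := by exact_mod_cast hn
  have key : ∀ k : ℕ, ∀ᵐ z : ℝ, z ∈ Set.uIoc ((k:ℝ)/n) (((k:ℝ)+1)/n) →
      g (kn n z) = g ((k:ℝ)/n) := by
    intro k
    have hne : ∀ᵐ z : ℝ, z ≠ ((k:ℝ)+1)/n := by
      refine MeasureTheory.ae_iff.2 ?_
      simp [Set.setOf_eq_eq_singleton']
    filter_upwards [hne] with z hz hmem
    have hlt : (k:ℝ)/n < ((k:ℝ)+1)/n := by gcongr; linarith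
    rw [Set.uIoc_of_le hlt.le] at hmem
    have h1 : (k:ℝ) < n * z := by
      have := hmem.1
      rw [div_lt_iff₀ hn'] at this; linarith [this]
    have h2 : n * z < (k:ℝ) + 1 := by
      rcases lt_or_eq_of_le hmem.2 with h | h
      · rw [lt_div_iff₀ hn'] at h; linarith
      · exact absurd h hz
    have hfloor : ⌊(n:ℝ) * z⌋ = (k : ℤ) := by
      rw [Int.floor_eq_iff]
      constructor
      · exact_mod_cast h1.le
      · exact_mod_cast h2
    unfold kn
    rw [hfloor]
    norm_num
  have hint : ∀ k : ℕ, IntervalIntegrable (fun z => g (kn n z)) volume ((k:ℝ)/n) (((k:ℝ)+1)/n) := by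
    intro k
    have hle : (k:ℝ)/n ≤ ((k:ℝ)+1)/n := by gcongr; linarith
    rw [intervalIntegrable_iff_integrableOn_Ioc_of_le hle]
    have hconst : IntegrableOn (fun _ : ℝ => g ((k:ℝ)/n)) (Set.Ioc ((k:ℝ)/n) (((k:ℝ)+1)/n)) volume :=
      integrableOn_const measure_Ioc_lt_top.ne
    refine hconst.congr_fun_ae ?_
    · have := key k
      rw [Set.uIoc_of_le hle] at this
      rw [Filter.EventuallyEq, ae_restrict_iff' measurableSet_Ioc]
      filter_upwards [this] with z hz hzmem
      exact (hz hzmem).symm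
  have adj := intervalIntegral.sum_integral_adjacent_intervals (a := fun k : ℕ => (k:ℝ)/n)
    (f := fun z => g (kn n z)) (n := n) (fun k _ => by push_cast; exact hint k)
  simp only [Nat.cast_zero, zero_div] at adj
  have hnn : ((n:ℝ))/n = 1 := div_self hn'.ne'
  rw [hnn] at adj
  rw [← adj, Finset.mul_sum]
  refine Finset.sum_congr rfl fun k _ => ?_
  have : (∫ z in ((k:ℝ)/n)..(((k:ℝ)+1)/n), g (kn n z)) = ∫ z in ((k:ℝ)/n)..(((k:ℝ)+1)/n), g ((k:ℝ)/n) :=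
    intervalIntegral.integral_congr_ae (key k)
  push_cast
  rw [this, intervalIntegral.integral_const, smul_eq_mul]
  congr 1
  field_simp
  ring


open Finset in
lemma cos_sum_eq (n m : ℕ) (hm : 0 < m) (hlt : m < 2*n) :
    ∑ k ∈ range n, Real.cos ((m:ℝ) * Real.pi * k / n) = if Odd m then 1 else 0 := by
  have hn : 0 < n := by omega
  have hn' : (0:ℝ) < n := by exact_mod_cast hn
  have hπ := Real.pi_pos
  set θ : ℝ := (m:ℝ) * Real.pi / n with hθ
  have hθpos : 0 < θ := by positivity
  have hθlt : θ < 2 * Real.pi := by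
    rw [hθ, div_lt_iff₀ hn']
    calc (m:ℝ) * Real.pi < (2*n:ℝ) * Real.pi := by
          have : (m:ℝ) < 2*n := by exact_mod_cast hlt
          nlinarith
      _ = 2 * Real.pi * n := by ring
  set x : ℂ := Complex.exp (θ * Complex.I) with hx
  have hx1 : x ≠ 1 := by
    intro h
    rw [hx, Complex.exp_eq_one_iff] at h
    obtain ⟨k, hk⟩ := h
    have hk' : (θ:ℂ) * Complex.I = ((((k:ℤ):ℝ)) * (2*Real.pi) : ℝ) * Complex.I := by
      rw [hk]; push_cast; ring
    have hθk : θ = ((k:ℤ):ℝ) * (2 * Real.pi) := by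
      have := mul_right_cancel₀ Complex.I_ne_zero hk'
      exact_mod_cast this
    have h0 : (0:ℝ) < ((k:ℤ):ℝ) * (2*Real.pi) := hθk ▸ hθpos
    have h1 : ((k:ℤ):ℝ) * (2*Real.pi) < 1 * (2 * Real.pi) := by rw [one_mul]; exact hθk ▸ hθlt
    have hk0 : (0:ℝ) < (k:ℤ) := by nlinarith
    have hk1 : ((k:ℤ):ℝ) < 1 := by nlinarith
    have : (0:ℤ) < k := by exact_mod_cast hk0
    have : (k:ℤ) < 1 := by exact_mod_cast hk1
    omega
  have hxpow : ∀ k : ℕ, x ^ k = Complex.exp ((θ * k : ℝ) * Complex.I) := by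
    intro k
    rw [hx, ← Complex.exp_nat_mul]
    push_cast
    ring_nf
  have hre : ∀ k : ℕ, Real.cos ((m:ℝ) * Real.pi * k / n) = (x ^ k).re := by
    intro k
    rw [hxpow k, Complex.exp_ofReal_mul_I_re]
    congr 1
    rw [hθ]; ring
  have hxn : x ^ n = (-1 : ℂ) ^ m := by
    rw [hxpow n]
    have : (θ * n : ℝ) = m * Real.pi := by rw [hθ]; field_simp
    rw [this]
    have h2 : ((m * Real.pi : ℝ) : ℂ) * Complex.I = (m:ℕ) * (Real.pi * Complex.I) := by
      push_cast; ring
    rw [h2, Complex.exp_nat_mul, Complex.exp_pi_mul_I]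
  have hsum : ∑ k ∈ range n, Real.cos ((m:ℝ) * Real.pi * k / n)
      = ((x ^ n - 1) / (x - 1)).re := by
    rw [← geom_sum_eq hx1]
    rw [Complex.re_sum]
    exact Finset.sum_congr rfl fun k _ => hre k
  rw [hsum, hxn]
  rcases Nat.even_or_odd m with he | ho
  · rw [he.neg_one_pow]
    simp [Nat.not_odd_iff_even.2 he]
  · rw [ho.neg_one_pow, if_pos ho]
    have hns : Complex.normSq (x - 1) ≠ 0 := by
      intro h
      exact hx1 (sub_eq_zero.1 (Complex.normSq_eq_zero.1 h))
    have hxre : x.re = Real.cos θ := by rw [hx, Complex.exp_ofReal_mul_I_re]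
    have hxim : x.im = Real.sin θ := by
      rw [hx]
      simpa using Complex.exp_ofReal_mul_I_im θ
    have hnsval : Complex.normSq (x - 1) = 2 - 2 * Real.cos θ := by
      rw [Complex.normSq_apply]
      simp only [Complex.sub_re, Complex.sub_im, Complex.one_re, Complex.one_im, hxre, hxim]
      nlinarith [Real.sin_sq_add_cos_sq θ]
    have : ((-1 - 1 : ℂ) / (x - 1)).re = (2 - 2*Real.cos θ) / Complex.normSq (x-1) := by
      rw [Complex.div_re]
      simp only [Complex.sub_re, Complex.sub_im, Complex.one_re, Complex.one_im,
        Complex.neg_re, Complex.neg_im, Complex.one_re, hxre, hxim]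
      norm_num
      ring
    rw [this, hnsval, div_self (hnsval ▸ hns)]


open Finset in
lemma orth_aux (n j l : ℕ) (hn : 2 ≤ n) (hj1 : 1 ≤ j) (hjn : j ≤ n-1)
    (hl1 : 1 ≤ l) (hln : l ≤ n-1) (hle : l ≤ j) :
    ∑ k ∈ range n, phi j ((k:ℝ)/n) * phi l ((k:ℝ)/n) = if j = l then (n:ℝ) else 0 := by
  have hs2 : Real.sqrt 2 * Real.sqrt 2 = 2 := Real.mul_self_sqrt (by norm_num)
  have hterm : ∀ k : ℕ, phi j ((k:ℝ)/n) * phi l ((k:ℝ)/n)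
      = Real.cos ((((j-l:ℕ)):ℝ) * Real.pi * k/n) - Real.cos ((((j+l:ℕ)):ℝ) * Real.pi * k/n) := by
    intro k
    unfold phi
    rw [Real.cos_sub_cos]
    push_cast [Nat.cast_sub hle]
    have e1 : ((j:ℝ) - l) * Real.pi * k / n + (j + l) * Real.pi * k / n
        = 2 * ((j:ℝ) * Real.pi * (k/n)) := by ring
    have e2 : (((j:ℝ) - l) * Real.pi * k / n - (j + l) * Real.pi * k / n)
        = 2 * (-((l:ℝ) * Real.pi * (k/n))) := by ring
    rw [e1, e2]
    have h2 : (2:ℝ) ≠ 0 := by norm_num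
    rw [mul_div_cancel_left₀ _ h2, mul_div_cancel_left₀ _ h2, Real.sin_neg]
    linear_combination (Real.sin ((j:ℝ)*Real.pi*((k:ℝ)/n)) * Real.sin ((l:ℝ)*Real.pi*((k:ℝ)/n))) * hs2
  rw [Finset.sum_congr rfl (fun k _ => hterm k), Finset.sum_sub_distrib]
  rcases eq_or_lt_of_le hle with heq | hlt
  · subst heq
    rw [if_pos rfl]
    have h1 : ∑ k ∈ range n, Real.cos ((((l-l:ℕ)):ℝ) * Real.pi * k/n) = n := by
      simp
    have h2 : ∑ k ∈ range n, Real.cos ((((l+l:ℕ)):ℝ) * Real.pi * k/n) = 0 := by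
      rw [cos_sum_eq n (l+l) (by omega) (by omega), if_neg (by rw [Nat.odd_iff]; omega)]
    rw [h1, h2, sub_zero]
  · rw [if_neg (by omega)]
    rw [cos_sum_eq n (j-l) (by omega) (by omega), cos_sum_eq n (j+l) (by omega) (by omega)]
    have : Odd (j - l) ↔ Odd (j + l) := by
      rcases Nat.even_or_odd l with he | ho <;> rcases Nat.even_or_odd j with he2 | ho2 <;>
        simp [Nat.odd_sub hle, Nat.odd_add, Nat.even_iff, Nat.odd_iff] at * <;> omega
    by_cases h : Odd (j - l)
    · rw [if_pos h, if_pos (this.1 h), sub_self]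
    · rw [if_neg h, if_neg (fun hc => h (this.2 hc)), sub_self]

open Finset in
lemma discrete_orth (n j l : ℕ) (hn : 2 ≤ n) (hj : j ∈ Finset.Icc 1 (n-1)) (hl : l ∈ Finset.Icc 1 (n-1)) :
    ∑ k ∈ range n, phi j ((k:ℝ)/n) * phi l ((k:ℝ)/n) = if j = l then (n:ℝ) else 0 := by
  simp only [Finset.mem_Icc] at hj hl
  rcases le_total l j with h | h
  · exact orth_aux n j l hn hj.1 hj.2 hl.1 hl.2 h
  · have := orth_aux n l j hn hl.1 hl.2 hj.1 hj.2 h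
    calc ∑ k ∈ range n, phi j ((k:ℝ)/n) * phi l ((k:ℝ)/n)
        = ∑ k ∈ range n, phi l ((k:ℝ)/n) * phi j ((k:ℝ)/n) := by
          exact Finset.sum_congr rfl fun k _ => mul_comm _ _
      _ = if l = j then (n:ℝ) else 0 := this
      _ = if j = l then (n:ℝ) else 0 := by simp [eq_comm]



open Finset MeasureTheory in
lemma inner_int (n : ℕ) (hn : 2 ≤ n) (c : ℕ → ℝ) :
    (∫ z in (0:ℝ)..1, (∑ j ∈ Icc 1 (n-1), c j * phi j (kn n z))^2)
      = ∑ j ∈ Icc 1 (n-1), (c j)^2 := by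
  have hn0 : (0:ℝ) < n := by exact_mod_cast (by omega : 0 < n)
  have h : (∫ z in (0:ℝ)..1, (∑ j ∈ Icc 1 (n-1), c j * phi j (kn n z))^2)
      = (1/(n:ℝ)) * ∑ k ∈ range n, (∑ j ∈ Icc 1 (n-1), c j * phi j ((k:ℝ)/n))^2 :=
    integral_comp_kn n (by omega) (fun w => (∑ j ∈ Icc 1 (n-1), c j * phi j w)^2)
  rw [h]
  have hk : ∀ k ∈ range n, (∑ j ∈ Icc 1 (n-1), c j * phi j ((k:ℝ)/n))^2
      = ∑ j ∈ Icc 1 (n-1), ∑ l ∈ Icc 1 (n-1),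
          (c j * c l) * (phi j ((k:ℝ)/n) * phi l ((k:ℝ)/n)) := by
    intro k _
    rw [sq, Finset.sum_mul_sum]
    exact Finset.sum_congr rfl fun j _ => Finset.sum_congr rfl fun l _ => by ring
  rw [Finset.sum_congr rfl hk, Finset.sum_comm]
  have hjl : ∀ j ∈ Icc 1 (n-1),
      (∑ k ∈ range n, ∑ l ∈ Icc 1 (n-1), (c j * c l) * (phi j ((k:ℝ)/n) * phi l ((k:ℝ)/n)))
      = (c j)^2 * n := by
    intro j hj
    rw [Finset.sum_comm]
    have : ∀ l ∈ Icc 1 (n-1),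
        (∑ k ∈ range n, (c j * c l) * (phi j ((k:ℝ)/n) * phi l ((k:ℝ)/n)))
        = if j = l then (c j * c l) * n else 0 := by
      intro l hl
      rw [← Finset.mul_sum, discrete_orth n j l hn hj hl]
      split_ifs <;> simp
    rw [Finset.sum_congr rfl this]
    have := Finset.sum_ite_eq (Icc 1 (n-1)) j (fun l => (c j * c l) * (n:ℝ))
    rw [this, if_pos hj, sq]
  rw [Finset.sum_congr rfl hjl, ← Finset.sum_mul]
  field_simp


lemma phi_abs_le (j : ℕ) (x : ℝ) : |phi j x| ≤ Real.sqrt 2 := by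
  unfold phi
  rw [abs_mul, abs_of_nonneg (Real.sqrt_nonneg 2)]
  calc Real.sqrt 2 * |Real.sin ((j:ℝ) * Real.pi * x)| ≤ Real.sqrt 2 * 1 := by
        have := Real.abs_sin_le_one ((j:ℝ) * Real.pi * x)
        nlinarith [Real.sqrt_nonneg 2]
    _ = Real.sqrt 2 := mul_one _

lemma phi_diff_le (j : ℕ) (a b : ℝ) :
    |phi j a - phi j b| ≤ Real.sqrt 2 * j * Real.pi * |a - b| := by
  unfold phi
  rw [← mul_sub, abs_mul, abs_of_nonneg (Real.sqrt_nonneg 2)]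
  have hsin : |Real.sin ((j:ℝ) * Real.pi * a) - Real.sin ((j:ℝ) * Real.pi * b)|
      ≤ |(j:ℝ) * Real.pi * a - (j:ℝ) * Real.pi * b| := by
    set p := (j:ℝ) * Real.pi * a
    set q := (j:ℝ) * Real.pi * b
    rw [Real.sin_sub_sin]
    have h1 : |Real.sin ((p - q)/2)| ≤ |(p-q)/2| := Real.abs_sin_le_abs
    have h2 : |Real.cos ((p + q)/2)| ≤ 1 := Real.abs_cos_le_one _
    rw [abs_mul, abs_mul]
    have : |(2:ℝ)| = 2 := by norm_num
    rw [this]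
    have hq : |(p-q)/2| = |p - q|/2 := by rw [abs_div]; norm_num
    nlinarith [abs_nonneg (Real.sin ((p-q)/2)), abs_nonneg (p-q)]
  have h2 : |(j:ℝ) * Real.pi * a - (j:ℝ) * Real.pi * b| = (j:ℝ) * Real.pi * |a - b| := by
    rw [← mul_sub, abs_mul]
    congr 1
    rw [abs_of_nonneg (by positivity)]
  calc Real.sqrt 2 * |Real.sin ((j:ℝ) * Real.pi * a) - Real.sin ((j:ℝ) * Real.pi * b)|
      ≤ Real.sqrt 2 * ((j:ℝ) * Real.pi * |a - b|) := by
        rw [← h2]; exact mul_le_mul_of_nonneg_left hsin (Real.sqrt_nonneg 2)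
    _ = Real.sqrt 2 * j * Real.pi * |a - b| := by ring

lemma phiLin_eq (n j : ℕ) (x : ℝ) :
    phiLin n j x = phi j ((⌊(n:ℝ)*x⌋:ℝ)/n)
      + ((n:ℝ)*x - (⌊(n:ℝ)*x⌋:ℝ)) * (phi j (((⌊(n:ℝ)*x⌋:ℤ) + 1 : ℤ)/n) - phi j ((⌊(n:ℝ)*x⌋:ℝ)/n)) := by
  unfold phiLin
  push_cast
  ring

open Int in
lemma phiLin_diff_le (n j : ℕ) (hn : 1 ≤ n) (x y : ℝ) :
    |phiLin n j x - phiLin n j y| ≤ Real.sqrt 2 * j * Real.pi * |x - y| := by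
  have hn0 : (0:ℝ) < n := by exact_mod_cast hn
  set L : ℝ := Real.sqrt 2 * j * Real.pi / n with hL
  have hL0 : 0 ≤ L := by rw [hL]; positivity
  set gI : ℤ → ℝ := fun k => phi j ((k:ℝ)/n) with hgI
  have hgpair : ∀ k m : ℤ, |gI k - gI m| ≤ L * |(k:ℝ) - m| := by
    intro k m
    have := phi_diff_le j ((k:ℝ)/n) ((m:ℝ)/n)
    have heq : |(k:ℝ)/n - (m:ℝ)/n| = |(k:ℝ) - m| / n := by
      rw [div_sub_div_same, abs_div, abs_of_pos hn0]
    rw [hgI]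
    simp only []
    calc |phi j ((k:ℝ)/n) - phi j ((m:ℝ)/n)| ≤ Real.sqrt 2 * j * Real.pi * |(k:ℝ)/n - (m:ℝ)/n| := this
      _ = L * |(k:ℝ) - m| := by rw [heq, hL]; ring
  set F : ℝ → ℝ := fun u => gI ⌊u⌋ + (u - (⌊u⌋:ℝ)) * (gI (⌊u⌋ + 1) - gI ⌊u⌋) with hF
  have hstep : ∀ k : ℤ, |gI (k+1) - gI k| ≤ L := by
    intro k
    have := hgpair (k+1) k
    push_cast at this
    simpa using this
  have key : ∀ u v : ℝ, u ≤ v → |F v - F u| ≤ L * (v - u) := by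
    intro u v huv
    have hfl := Int.floor_mono huv
    rcases eq_or_lt_of_le hfl with heq | hlt
    · have : F v - F u = (v - u) * (gI (⌊u⌋ + 1) - gI ⌊u⌋) := by
        rw [hF]; simp only []; rw [← heq]; ring
      rw [this, abs_mul, abs_of_nonneg (by linarith)]
      calc (v-u) * |gI (⌊u⌋ + 1) - gI ⌊u⌋| ≤ (v-u) * L :=
            mul_le_mul_of_nonneg_left (hstep ⌊u⌋) (by linarith)
        _ = L * (v-u) := by ring
    · set a := ⌊u⌋ with ha
      set b := ⌊v⌋ with hb
      have hu1 : u < (a:ℝ) + 1 := Int.lt_floor_add_one u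
      have hu0 : (a:ℝ) ≤ u := Int.floor_le u
      have hv0 : (b:ℝ) ≤ v := Int.floor_le v
      have hab : (a:ℝ) + 1 ≤ (b:ℝ) := by exact_mod_cast hlt
      have h1 : |F u - gI (a+1)| ≤ L * ((a:ℝ) + 1 - u) := by
        have : F u - gI (a+1) = (1 - (u - a)) * (gI a - gI (a+1)) := by
          rw [hF]; simp only []; ring
        rw [this, abs_mul, abs_of_nonneg (by linarith)]
        have h := (hstep a)
        rw [abs_sub_comm] at h
        calc (1 - (u - (a:ℝ))) * |gI a - gI (a+1)| ≤ (1 - (u - (a:ℝ))) * L :=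
              mul_le_mul_of_nonneg_left h (by linarith)
          _ = L * ((a:ℝ) + 1 - u) := by ring
      have h2 : |F v - gI b| ≤ L * (v - (b:ℝ)) := by
        have : F v - gI b = (v - (b:ℝ)) * (gI (b+1) - gI b) := by
          rw [hF]; simp only []; ring
        rw [this, abs_mul, abs_of_nonneg (by linarith)]
        calc (v - (b:ℝ)) * |gI (b+1) - gI b| ≤ (v - (b:ℝ)) * L :=
              mul_le_mul_of_nonneg_left (hstep b) (by linarith)
          _ = L * (v - (b:ℝ)) := by ring
      have h3 : |gI b - gI (a+1)| ≤ L * ((b:ℝ) - ((a:ℝ)+1)) := by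
        have := hgpair b (a+1)
        have he : |(b:ℝ) - ((a+1:ℤ):ℝ)| = (b:ℝ) - ((a:ℝ)+1) := by
          push_cast
          rw [abs_of_nonneg (by linarith)]
        rw [he] at this
        push_cast at this ⊢
        exact this
      calc |F v - F u| = |(F v - gI b) + (gI b - gI (a+1)) + (gI (a+1) - F u)| := by ring_nf
        _ ≤ |F v - gI b| + |gI b - gI (a+1)| + |gI (a+1) - F u| := by
            exact (abs_add_three _ _ _)
        _ ≤ L * (v - (b:ℝ)) + L * ((b:ℝ) - ((a:ℝ)+1)) + L * ((a:ℝ) + 1 - u) := by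
            rw [abs_sub_comm (gI (a+1)) (F u)]
            exact add_le_add (add_le_add h2 h3) h1
        _ = L * (v - u) := by ring
  have hrepr : ∀ w : ℝ, phiLin n j w = F ((n:ℝ) * w) := by
    intro w
    rw [phiLin_eq, hF]
  rw [hrepr x, hrepr y]
  have habs : ∀ u v : ℝ, u ≤ v → |F u - F v| ≤ L * |u - v| := by
    intro u v huv
    rw [abs_sub_comm]
    calc |F v - F u| ≤ L * (v - u) := key u v huv
      _ = L * |u - v| := by rw [abs_sub_comm, abs_of_nonneg (by linarith)]
  have main : |F ((n:ℝ)*x) - F ((n:ℝ)*y)| ≤ L * |(n:ℝ)*x - (n:ℝ)*y| := by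
    rcases le_total ((n:ℝ)*x) ((n:ℝ)*y) with h | h
    · exact habs _ _ h
    · rw [abs_sub_comm, abs_sub_comm ((n:ℝ)*x)]
      exact habs _ _ h
  calc |F ((n:ℝ)*x) - F ((n:ℝ)*y)| ≤ L * |(n:ℝ)*x - (n:ℝ)*y| := main
    _ = Real.sqrt 2 * j * Real.pi * |x - y| := by
        rw [← mul_sub, abs_mul, abs_of_pos hn0, hL]
        field_simp

lemma phiLin_abs_le (n j : ℕ) (x : ℝ) : |phiLin n j x| ≤ Real.sqrt 2 := by
  unfold phiLin
  set τ : ℝ := (n:ℝ)*x - (⌊(n:ℝ)*x⌋:ℝ) with hτ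
  have hτ0 : 0 ≤ τ := by rw [hτ]; have := Int.floor_le ((n:ℝ)*x); linarith
  have hτ1 : τ ≤ 1 := by
    rw [hτ]
    have := Int.lt_floor_add_one ((n:ℝ)*x)
    linarith
  have ha := phi_abs_le j ((⌊(n:ℝ)*x⌋:ℝ)/n)
  have hb := phi_abs_le j (((⌊(n:ℝ)*x⌋:ℝ)+1)/n)
  have : phi j ((⌊(n:ℝ)*x⌋:ℝ)/n) + τ * (phi j (((⌊(n:ℝ)*x⌋:ℝ)+1)/n) - phi j ((⌊(n:ℝ)*x⌋:ℝ)/n))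
      = (1-τ) * phi j ((⌊(n:ℝ)*x⌋:ℝ)/n) + τ * phi j (((⌊(n:ℝ)*x⌋:ℝ)+1)/n) := by ring
  rw [this]
  calc |(1-τ) * phi j ((⌊(n:ℝ)*x⌋:ℝ)/n) + τ * phi j (((⌊(n:ℝ)*x⌋:ℝ)+1)/n)|
      ≤ (1-τ) * |phi j ((⌊(n:ℝ)*x⌋:ℝ)/n)| + τ * |phi j (((⌊(n:ℝ)*x⌋:ℝ)+1)/n)| := by
        calc _ ≤ |(1-τ) * phi j ((⌊(n:ℝ)*x⌋:ℝ)/n)| + |τ * phi j (((⌊(n:ℝ)*x⌋:ℝ)+1)/n)| := abs_add_le _ _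
          _ = _ := by rw [abs_mul, abs_mul, abs_of_nonneg (by linarith), abs_of_nonneg hτ0]
    _ ≤ (1-τ) * Real.sqrt 2 + τ * Real.sqrt 2 := by
        exact add_le_add (mul_le_mul_of_nonneg_left ha (by linarith))
          (mul_le_mul_of_nonneg_left hb hτ0)
    _ = Real.sqrt 2 := by ring


lemma lamN_le (n j : ℕ) (hn : 2 ≤ n) (hj1 : 1 ≤ j) (hjn : j ≤ n - 1) :
    lamN n j ≤ -4 * (j:ℝ)^2 := by
  have hn0 : (0:ℝ) < n := by exact_mod_cast (by omega : 0 < n)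
  have hj0 : (0:ℝ) < j := by exact_mod_cast hj1
  have hπ := Real.pi_pos
  have harg0 : 0 ≤ (j:ℝ) * Real.pi / (2*n) := by positivity
  have hargle : (j:ℝ) * Real.pi / (2*n) ≤ Real.pi / 2 := by
    rw [div_le_div_iff₀ (by positivity) (by norm_num)]
    have hjn' : (j:ℝ) ≤ n := by
      have : j ≤ n := by omega
      exact_mod_cast this
    nlinarith
  have hsin : (j:ℝ)/n ≤ Real.sin ((j:ℝ) * Real.pi / (2*n)) := by
    have := Real.mul_le_sin harg0 hargle
    calc (j:ℝ)/n = 2 / Real.pi * ((j:ℝ) * Real.pi / (2*n)) := by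
          field_simp
      _ ≤ _ := this
  have hsq : ((j:ℝ)/n)^2 ≤ (Real.sin ((j:ℝ) * Real.pi / (2*n)))^2 := by
    have h0 : 0 ≤ (j:ℝ)/n := by positivity
    nlinarith
  unfold lamN
  have hmul := mul_le_mul_of_nonneg_left hsq (show (0:ℝ) ≤ 4*(n:ℝ)^2 by positivity)
  have heq : 4*(n:ℝ)^2*((j:ℝ)/n)^2 = 4*(j:ℝ)^2 := by field_simp
  nlinarith [hmul, heq]

open intervalIntegral in
lemma exp_integral_le (lam t : ℝ) (hl : lam < 0) (ht : 0 ≤ t) :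
    ∫ r in (0:ℝ)..t, Real.exp (2*lam*(t-r)) ≤ 1/(-2*lam) := by
  have hcomp : (∫ r in (0:ℝ)..t, Real.exp (2*lam*(t-r)))
      = ∫ s in (0:ℝ)..t, Real.exp (2*lam*s) := by
    have := intervalIntegral.integral_comp_sub_left (a := (0:ℝ)) (b := t)
      (fun s => Real.exp (2*lam*s)) t
    rw [sub_self, sub_zero] at this
    exact this
  rw [hcomp]
  have hderiv : ∀ s ∈ Set.uIcc (0:ℝ) t, HasDerivAt (fun s => Real.exp (2*lam*s)/(2*lam))
      (Real.exp (2*lam*s)) s := by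
    intro s _
    have h1 : HasDerivAt (fun s : ℝ => 2*lam*s) (2*lam) s := by
      simpa using (hasDerivAt_id s).const_mul (2*lam)
    have h2 := (h1.exp).div_const (2*lam)
    have : Real.exp (2*lam*s) * (2*lam) / (2*lam) = Real.exp (2*lam*s) := by
      rw [mul_div_assoc, div_self (show (2:ℝ)*lam ≠ 0 from ne_of_lt (by linarith)), mul_one]
    rwa [this] at h2
  have hint : IntervalIntegrable (fun s => Real.exp (2*lam*s)) MeasureTheory.volume 0 t :=
    (Real.continuous_exp.comp (by continuity)).intervalIntegrable 0 t
  rw [intervalIntegral.integral_eq_sub_of_hasDerivAt hderiv hint]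
  have h1 : Real.exp (2*lam*t) ≤ 1 := by
    rw [show (1:ℝ) = Real.exp 0 from (Real.exp_zero).symm]
    apply Real.exp_le_exp.2
    nlinarith
  have h2 : Real.exp (2*lam*0) = 1 := by norm_num
  rw [h2]
  have hneg : 2*lam < 0 := by linarith
  have key : Real.exp (2*lam*t)/(2*lam) ≤ 0 :=
    div_nonpos_of_nonneg_of_nonpos (Real.exp_pos _).le hneg.le
  have hrew : 1/(-2*lam) = -(1/(2*lam)) := by
    rw [show (-2:ℝ)*lam = -(2*lam) by ring, div_neg]
  rw [hrew]
  linarith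

open Finset in
lemma sum_min_le (m : ℕ) (B : ℝ) (hB : 0 ≤ B) :
    ∑ j ∈ Icc 1 m, min ((1:ℝ)/(j:ℝ)^2) B ≤ 3 * Real.sqrt B := by
  have hsqrt : 0 ≤ Real.sqrt B := Real.sqrt_nonneg B
  have hmin_inv : ∀ j ∈ Icc 1 m, min ((1:ℝ)/(j:ℝ)^2) B ≤ ((j:ℝ)^2)⁻¹ := by
    intro j hj
    rw [one_div] at *
    exact min_le_left _ _
  rcases le_or_gt 1 B with hB1 | hB1
  · -- B ≥ 1
    have hsum : ∑ j ∈ Icc 1 m, min ((1:ℝ)/(j:ℝ)^2) B ≤ ∑ j ∈ Icc 1 m, ((j:ℝ)^2)⁻¹ :=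
      Finset.sum_le_sum hmin_inv
    have h2 : ∑ j ∈ Icc 1 m, ((j:ℝ)^2)⁻¹ ≤ 2 := by
      rcases Nat.lt_or_ge m 1 with hm | hm
      · interval_cases m
        simp
      · have hsplit : Icc 1 m = insert 1 (Ioc 1 m) := by
          rw [Finset.Icc_eq_cons_Ioc hm, Finset.cons_eq_insert]
        rw [hsplit, Finset.sum_insert (by simp)]
        have h3 := sum_Ioc_inv_sq_le_sub (α := ℝ) (k := 1) (n := m) one_ne_zero hm
        have hm0 : (0:ℝ) ≤ ((m:ℝ))⁻¹ := by positivity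
        have h4 : ∑ i ∈ Ioc 1 m, (((i:ℕ):ℝ)^2)⁻¹ ≤ 1 := by
          calc ∑ i ∈ Ioc 1 m, (((i:ℕ):ℝ)^2)⁻¹ ≤ ((1:ℕ):ℝ)⁻¹ - ((m:ℝ))⁻¹ := by
                exact_mod_cast h3
            _ ≤ 1 := by norm_num
        push_cast at h4 ⊢
        norm_num
        linarith
    have hs1 : 1 ≤ Real.sqrt B := by
      rw [show (1:ℝ) = Real.sqrt 1 from (Real.sqrt_one).symm]
      exact Real.sqrt_le_sqrt hB1
    calc ∑ j ∈ Icc 1 m, min ((1:ℝ)/(j:ℝ)^2) B ≤ 2 := hsum.trans h2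
      _ ≤ 3 * Real.sqrt B := by nlinarith
  · rcases eq_or_lt_of_le hB with h0 | hBpos
    · rw [← h0]
      have : ∑ j ∈ Icc 1 m, min ((1:ℝ)/(j:ℝ)^2) (0:ℝ) ≤ ∑ j ∈ Icc 1 m, (0:ℝ) :=
        Finset.sum_le_sum (fun j _ => min_le_right _ _)
      simpa using this
    have hsB : 0 < Real.sqrt B := Real.sqrt_pos.2 hBpos
    set N : ℕ := ⌊1/Real.sqrt B⌋₊ with hN
    have hsB1 : 1 ≤ 1/Real.sqrt B := by
      rw [le_div_iff₀ hsB, one_mul]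
      rw [show (1:ℝ) = Real.sqrt 1 from (Real.sqrt_one).symm]
      exact Real.sqrt_le_sqrt hB1.le
    have hN1 : 1 ≤ N := Nat.le_floor (by exact_mod_cast hsB1)
    have hNle : (N:ℝ) ≤ 1/Real.sqrt B := Nat.floor_le (by positivity)
    have hNgt : 1/Real.sqrt B < (N:ℝ) + 1 := Nat.lt_floor_add_one _
    have hN0 : (0:ℝ) < N := by exact_mod_cast hN1
    have hNB : (N:ℝ) * B ≤ Real.sqrt B := by
      calc (N:ℝ) * B ≤ (1/Real.sqrt B) * B := by nlinarith
        _ = Real.sqrt B := by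
            rw [div_mul_eq_mul_div, one_mul, div_eq_iff hsB.ne', Real.mul_self_sqrt hB]
    have hinvN : ((N:ℝ))⁻¹ ≤ 2 * Real.sqrt B := by
      have h1lt : 1 < 2*(N:ℝ)*Real.sqrt B := by
        rw [div_lt_iff₀ hsB] at hNgt
        have hN1' : (1:ℝ) ≤ (N:ℝ) := by exact_mod_cast hN1
        nlinarith [mul_le_mul_of_nonneg_right (show (N:ℝ)+1 ≤ 2*(N:ℝ) by linarith) hsB.le]
      rw [inv_eq_one_div, div_le_iff₀ hN0]
      nlinarith
    have hminB : ∀ j ∈ Icc 1 N, min ((1:ℝ)/(j:ℝ)^2) B ≤ B := fun j _ => min_le_right _ _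
    rcases le_or_gt m N with hmN | hNm
    · have h1 : ∑ j ∈ Icc 1 m, min ((1:ℝ)/(j:ℝ)^2) B ≤ ∑ j ∈ Icc 1 m, B :=
        Finset.sum_le_sum (fun j _ => min_le_right _ _)
      have hcard : ∑ j ∈ Icc 1 m, B = (m:ℝ) * B := by
        rw [Finset.sum_const, Nat.card_Icc]
        simp [nsmul_eq_mul]
      have hmN' : (m:ℝ) ≤ N := by exact_mod_cast hmN
      calc ∑ j ∈ Icc 1 m, min ((1:ℝ)/(j:ℝ)^2) B ≤ (m:ℝ) * B := by rw [← hcard]; exact h1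
        _ ≤ (N:ℝ) * B := by nlinarith
        _ ≤ Real.sqrt B := hNB
        _ ≤ 3 * Real.sqrt B := by linarith
    · have hsub : Icc 1 m = Icc 1 N ∪ Ioc N m := by
        ext a
        simp only [Finset.mem_Icc, Finset.mem_Ioc, Finset.mem_union]
        omega
      have hdisj : Disjoint (Icc 1 N) (Ioc N m) := by
        rw [Finset.disjoint_left]
        intro a ha hb
        simp only [Finset.mem_Icc, Finset.mem_Ioc] at ha hb
        omega
      rw [hsub, Finset.sum_union hdisj]
      have hpart1 : ∑ j ∈ Icc 1 N, min ((1:ℝ)/(j:ℝ)^2) B ≤ Real.sqrt B := by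
        calc ∑ j ∈ Icc 1 N, min ((1:ℝ)/(j:ℝ)^2) B ≤ ∑ j ∈ Icc 1 N, B :=
              Finset.sum_le_sum hminB
          _ = (N:ℝ) * B := by rw [Finset.sum_const, Nat.card_Icc]; simp [nsmul_eq_mul]
          _ ≤ Real.sqrt B := hNB
      have hpart2 : ∑ j ∈ Ioc N m, min ((1:ℝ)/(j:ℝ)^2) B ≤ 2 * Real.sqrt B := by
        have h1 : ∑ j ∈ Ioc N m, min ((1:ℝ)/(j:ℝ)^2) B ≤ ∑ j ∈ Ioc N m, (((j:ℕ):ℝ)^2)⁻¹ :=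
          Finset.sum_le_sum (fun j _ => by rw [one_div]; exact min_le_left _ _)
        have h2 := sum_Ioc_inv_sq_le_sub (α := ℝ) (k := N) (n := m) (by omega) hNm.le
        have hm0 : (0:ℝ) ≤ ((m:ℝ))⁻¹ := by positivity
        calc ∑ j ∈ Ioc N m, min ((1:ℝ)/(j:ℝ)^2) B ≤ ∑ j ∈ Ioc N m, (((j:ℕ):ℝ)^2)⁻¹ := h1
          _ ≤ ((N:ℝ))⁻¹ - ((m:ℝ))⁻¹ := h2
          _ ≤ ((N:ℝ))⁻¹ := by linarith
          _ ≤ 2 * Real.sqrt B := hinvN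
      linarith

/-- For every `T > 0` there is a constant `C₃` independent of `n` such that
`∫₀ᵗ∫₀¹ (Gⁿ(t-r,x,z) - Gⁿ(t-r,y,z))² dz dr ≤ C₃ |x-y|` for all `x, y ∈ [0,1]`,
`t ∈ [0,T]`. -/
theorem GN_space_difference_bound (T : ℝ) (hT : 0 < T) :
    ∃ C₃ : ℝ, ∀ n : ℕ, 2 ≤ n → ∀ x ∈ Set.Icc (0:ℝ) 1, ∀ y ∈ Set.Icc (0:ℝ) 1,
      ∀ t ∈ Set.Icc (0:ℝ) T,
      (∫ r in (0:ℝ)..t, ∫ z in (0:ℝ)..1, (GN n (t - r) x z - GN n (t - r) y z)^2)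
        ≤ C₃ * |x - y| := by
  refine ⟨3 * (Real.pi / 2), ?_⟩
  intro n hn x hx y hy t ht
  have hπ := Real.pi_pos
  set δ := |x - y| with hδ
  have hδ0 : 0 ≤ δ := abs_nonneg _
  set d : ℕ → ℝ := fun j => phiLin n j x - phiLin n j y with hd
  have hinner : ∀ r : ℝ, (∫ z in (0:ℝ)..1, (GN n (t-r) x z - GN n (t-r) y z)^2)
      = ∑ j ∈ Finset.Icc 1 (n-1), (Real.exp (lamN n j * (t-r)) * d j)^2 := by
    intro r
    have hdiff : ∀ z : ℝ, GN n (t-r) x z - GN n (t-r) y z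
        = ∑ j ∈ Finset.Icc 1 (n-1), (Real.exp (lamN n j * (t-r)) * d j) * phi j (kn n z) := by
      intro z
      unfold GN
      rw [← Finset.sum_sub_distrib]
      exact Finset.sum_congr rfl fun j _ => by rw [hd]; ring
    simp only [hdiff]
    exact inner_int n hn (fun j => Real.exp (lamN n j * (t-r)) * d j)
  simp only [hinner]
  have hdsq8 : ∀ jj : ℕ, (d jj)^2 ≤ 8 := by
    intro jj
    have h1 := phiLin_abs_le n jj x
    have h2 := phiLin_abs_le n jj y
    have habs : |d jj| ≤ 2 * Real.sqrt 2 := by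
      rw [hd]
      calc |phiLin n jj x - phiLin n jj y| ≤ |phiLin n jj x| + |phiLin n jj y| := abs_sub _ _
        _ ≤ 2 * Real.sqrt 2 := by linarith
    have hs2 : Real.sqrt 2 * Real.sqrt 2 = 2 := Real.mul_self_sqrt (by norm_num)
    calc (d jj)^2 = |d jj|^2 := (sq_abs _).symm
      _ ≤ (2*Real.sqrt 2)^2 := by nlinarith [abs_nonneg (d jj)]
      _ = 8 := by nlinarith
  have hdsqlip : ∀ jj : ℕ, (d jj)^2 ≤ 2 * (jj:ℝ)^2 * Real.pi^2 * δ^2 := by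
    intro jj
    have h1 := phiLin_diff_le n jj (by omega) x y
    have hs2 : Real.sqrt 2 * Real.sqrt 2 = 2 := Real.mul_self_sqrt (by norm_num)
    have h2 : |d jj| ≤ Real.sqrt 2 * jj * Real.pi * δ := by rw [hd, hδ]; exact h1
    calc (d jj)^2 = |d jj|^2 := (sq_abs _).symm
      _ ≤ (Real.sqrt 2 * jj * Real.pi * δ)^2 := by
          nlinarith [abs_nonneg (d jj), Real.sqrt_nonneg 2,
            mul_nonneg (mul_nonneg (mul_nonneg (Real.sqrt_nonneg 2) (Nat.cast_nonneg jj)) hπ.le) hδ0]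
      _ = 2 * (jj:ℝ)^2 * Real.pi^2 * δ^2 := by nlinarith
  have hterm : ∀ j ∈ Finset.Icc 1 (n-1),
      (∫ r in (0:ℝ)..t, (Real.exp (lamN n j * (t-r)) * d j)^2)
        ≤ min ((1:ℝ)/(j:ℝ)^2) ((Real.pi/2 * δ)^2) := by
    intro j hj
    rw [Finset.mem_Icc] at hj
    have hjR : (1:ℝ) ≤ (j:ℝ) := by exact_mod_cast hj.1
    have hlam : lamN n j ≤ -4*(j:ℝ)^2 := lamN_le n j hn hj.1 hj.2
    have hlamneg : lamN n j < 0 := lt_of_le_of_lt hlam (by nlinarith)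
    have hpt : ∀ r : ℝ, (Real.exp (lamN n j * (t-r)) * d j)^2
        = (d j)^2 * Real.exp (2*(lamN n j)*(t-r)) := by
      intro r
      rw [mul_pow, sq (Real.exp _), ← Real.exp_add]
      ring_nf
    simp only [hpt]
    rw [intervalIntegral.integral_const_mul]
    have hExp := exp_integral_le (lamN n j) t hlamneg ht.1
    have hExp0 : 0 ≤ ∫ r in (0:ℝ)..t, Real.exp (2*(lamN n j)*(t-r)) := by
      apply intervalIntegral.integral_nonneg ht.1
      intro u _
      exact (Real.exp_pos _).le
    have hstep1 : (d j)^2 * (∫ r in (0:ℝ)..t, Real.exp (2*(lamN n j)*(t-r)))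
        ≤ (d j)^2 * (1/(-2*lamN n j)) :=
      mul_le_mul_of_nonneg_left hExp (sq_nonneg _)
    refine hstep1.trans (le_min ?_ ?_)
    · have h8j : (8:ℝ)*(j:ℝ)^2 ≤ -2*lamN n j := by nlinarith
      have hpos : (0:ℝ) < 8*(j:ℝ)^2 := by nlinarith
      have hfrac : 1/(-2*lamN n j) ≤ 1/(8*(j:ℝ)^2) :=
        one_div_le_one_div_of_le hpos h8j
      have hfrac0 : 0 ≤ 1/(-2*lamN n j) := le_of_lt (one_div_pos.2 (by nlinarith))
      calc (d j)^2 * (1/(-2*lamN n j)) ≤ 8 * (1/(8*(j:ℝ)^2)) :=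
            mul_le_mul (hdsq8 j) hfrac hfrac0 (by norm_num)
        _ = (1:ℝ)/(j:ℝ)^2 := by
            rw [one_div, one_div, mul_inv]
            field_simp
    · have h8j : (8:ℝ)*(j:ℝ)^2 ≤ -2*lamN n j := by nlinarith
      have hpos : (0:ℝ) < 8*(j:ℝ)^2 := by nlinarith
      have hfrac : 1/(-2*lamN n j) ≤ 1/(8*(j:ℝ)^2) :=
        one_div_le_one_div_of_le hpos h8j
      have hfrac0 : 0 ≤ 1/(-2*lamN n j) := le_of_lt (one_div_pos.2 (by nlinarith))
      calc (d j)^2 * (1/(-2*lamN n j))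
          ≤ (2 * (j:ℝ)^2 * Real.pi^2 * δ^2) * (1/(8*(j:ℝ)^2)) :=
            mul_le_mul (hdsqlip j) hfrac hfrac0 (by positivity)
        _ = (Real.pi/2 * δ)^2 := by
            have hj0 : (j:ℝ) ≠ 0 := by linarith
            field_simp
            ring
  have hswap : (∫ r in (0:ℝ)..t, ∑ j ∈ Finset.Icc 1 (n-1), (Real.exp (lamN n j * (t-r)) * d j)^2)
      = ∑ j ∈ Finset.Icc 1 (n-1), ∫ r in (0:ℝ)..t, (Real.exp (lamN n j * (t-r)) * d j)^2 := by
    apply intervalIntegral.integral_finset_sum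
    intro j _
    exact (((Real.continuous_exp.comp
      (continuous_const.mul (continuous_const.sub continuous_id))).mul
        continuous_const).pow 2).intervalIntegrable 0 t
  rw [hswap]
  have hB0 : (0:ℝ) ≤ (Real.pi/2 * δ)^2 := sq_nonneg _
  calc ∑ j ∈ Finset.Icc 1 (n-1), ∫ r in (0:ℝ)..t, (Real.exp (lamN n j * (t-r)) * d j)^2
      ≤ ∑ j ∈ Finset.Icc 1 (n-1), min ((1:ℝ)/(j:ℝ)^2) ((Real.pi/2 * δ)^2) :=
        Finset.sum_le_sum hterm
    _ ≤ 3 * Real.sqrt ((Real.pi/2 * δ)^2) := sum_min_le (n-1) _ hB0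
    _ = 3 * (Real.pi/2 * δ) := by rw [Real.sqrt_sq (by positivity)]
    _ = 3 * (Real.pi/2) * δ := by ring
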